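/- arXiv:2008.03910 — 3 statements merged into one kernel-verified Lean document; each statement's English description precedes it below -/
import Mathlib

section
/- Fix a positive integer n and real numbers t > 0 and γ > 0, and for each natural number k set a_{t,γ}(k) = (1/Γ(γ)) ∫₀ᵗ r^{γ−1} e^{−(r+t)(2k+n)} dr. Then (i) a_{t,γ}(k) = e^{−t(2k+n)} · (1/Γ(γ)) ∫₀ᵗ r^{γ−1} e^{−r(2k+n)} dr for every k, and (ii) there exist constants C₁ > 0 and C₂ > 0 such that C₁ (2k+n)^{−γ} ≤ e^{t(2k+n)} a_{t,γ}(k) ≤ C₂ (2k+n)^{−γ} for all natural numbers k. -/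
open MeasureTheory Real

/-- Coefficients in the proof of Theorem 1.6 for the Hermite heat kernel transform:
with `a_{t,γ}(k) = Γ(γ)⁻¹ ∫₀ᵗ r^{γ−1} e^{−(r+t)(2k+n)} dr`, one has
(i) `a_{t,γ}(k) = e^{−t(2k+n)} Γ(γ)⁻¹ ∫₀ᵗ r^{γ−1} e^{−r(2k+n)} dr`, and
(ii) `e^{t(2k+n)} a_{t,γ}(k) ≍ (2k+n)^{−γ}` uniformly in `k`. -/
theorem stmt5 (n : ℕ) (hn : 0 < n) (t γ : ℝ) (ht : 0 < t) (hγ : 0 < γ)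
    (a : ℕ → ℝ)
    (ha : ∀ k : ℕ, a k = (1 / Real.Gamma γ) *
      ∫ r in Set.Ioo (0 : ℝ) t,
        r ^ (γ - 1) * Real.exp (-(r + t) * (2 * (k : ℝ) + (n : ℝ)))) :
    (∀ k : ℕ, a k = Real.exp (-t * (2 * (k : ℝ) + (n : ℝ))) *
        ((1 / Real.Gamma γ) *
          ∫ r in Set.Ioo (0 : ℝ) t,
            r ^ (γ - 1) * Real.exp (-r * (2 * (k : ℝ) + (n : ℝ))))) ∧
    ∃ C₁ C₂ : ℝ, 0 < C₁ ∧ 0 < C₂ ∧ ∀ k : ℕ,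
      C₁ * (2 * (k : ℝ) + (n : ℝ)) ^ (-γ) ≤
          Real.exp (t * (2 * (k : ℝ) + (n : ℝ))) * a k ∧
      Real.exp (t * (2 * (k : ℝ) + (n : ℝ))) * a k ≤
          C₂ * (2 * (k : ℝ) + (n : ℝ)) ^ (-γ) := by
  have hΓ : 0 < Real.Gamma γ := Real.Gamma_pos_of_pos hγ
  have hn1 : (1 : ℝ) ≤ (n : ℝ) := by exact_mod_cast hn
  have hμpos : ∀ k : ℕ, (0 : ℝ) < 2 * (k : ℝ) + (n : ℝ) := fun k => by positivity
  -- part (i)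
  have hi : ∀ k : ℕ, a k = Real.exp (-t * (2 * (k : ℝ) + (n : ℝ))) *
      ((1 / Real.Gamma γ) *
        ∫ r in Set.Ioo (0 : ℝ) t,
          r ^ (γ - 1) * Real.exp (-r * (2 * (k : ℝ) + (n : ℝ)))) := by
    intro k
    set μ := 2 * (k : ℝ) + (n : ℝ)
    have : (∫ r in Set.Ioo (0 : ℝ) t, r ^ (γ - 1) * Real.exp (-(r + t) * μ))
        = Real.exp (-t * μ) * ∫ r in Set.Ioo (0 : ℝ) t,
            r ^ (γ - 1) * Real.exp (-r * μ) := by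
      rw [← integral_const_mul]
      refine integral_congr_ae (Filter.Eventually.of_forall fun r => ?_)
      show r ^ (γ - 1) * Real.exp (-(r + t) * μ)
          = Real.exp (-t * μ) * (r ^ (γ - 1) * Real.exp (-r * μ))
      rw [show (-(r + t) * μ) = (-r * μ) + (-t * μ) by ring, Real.exp_add]
      ring
    rw [ha k, this]; ring
  refine ⟨hi, ?_⟩
  -- integrability
  have hint : ∀ k : ℕ, IntegrableOn
      (fun r : ℝ => r ^ (γ - 1) * Real.exp (-r * (2 * (k : ℝ) + (n : ℝ))))
      (Set.Ioi (0 : ℝ)) := by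
    intro k
    have h := integrableOn_rpow_mul_exp_neg_mul_rpow
      (p := 1) (by linarith : (-1 : ℝ) < γ - 1) one_pos (hμpos k)
    have h2 : (fun x : ℝ => x ^ (γ - 1) *
        Real.exp (-(2 * (k : ℝ) + (n : ℝ)) * x ^ (1 : ℝ)))
        = fun r : ℝ => r ^ (γ - 1) * Real.exp (-r * (2 * (k : ℝ) + (n : ℝ))) := by
      funext x
      rw [Real.rpow_one,
        show -(2 * (k : ℝ) + (n : ℝ)) * x = -x * (2 * (k : ℝ) + (n : ℝ)) by ring]
    rwa [h2] at h
  -- the key identity: e^{tμ} a k = Γ(γ)⁻¹ ∫₀ᵗ r^{γ-1} e^{-rμ}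
  have key : ∀ k : ℕ, Real.exp (t * (2 * (k : ℝ) + (n : ℝ))) * a k
      = (1 / Real.Gamma γ) * ∫ r in Set.Ioo (0 : ℝ) t,
          r ^ (γ - 1) * Real.exp (-r * (2 * (k : ℝ) + (n : ℝ))) := by
    intro k
    rw [hi k, ← mul_assoc, ← Real.exp_add]
    ring_nf
    rw [Real.exp_zero, one_mul]
  set c : ℝ := min (t * (n : ℝ)) 1 with hc
  have hcpos : 0 < c := lt_min (by positivity) one_pos
  have hc1 : c ≤ 1 := min_le_right _ _
  refine ⟨(1 / Real.Gamma γ) * (Real.exp (-1) * c ^ γ / γ), 1, by positivity, one_pos,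
    fun k => ?_⟩
  set μ := 2 * (k : ℝ) + (n : ℝ) with hμ
  have hμ0 : (0 : ℝ) < μ := hμpos k
  have hμ1 : (1 : ℝ) ≤ μ := by
    rw [hμ]; have : (0 : ℝ) ≤ (k : ℝ) := Nat.cast_nonneg k; linarith
  have hnonneg : ∀ r ∈ Set.Ioi (0:ℝ), 0 ≤ r ^ (γ - 1) * Real.exp (-r * μ) :=
    fun r hr => mul_nonneg (Real.rpow_nonneg (Set.mem_Ioi.mp hr).le _) (Real.exp_pos _).le
  constructor
  · -- lower bound
    rw [key k]
    set m : ℝ := min t (1 / μ) with hm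
    have hm0 : 0 < m := lt_min ht (by positivity)
    have hmt : m ≤ t := min_le_left _ _
    have hmge : c / μ ≤ m := by
      rw [div_le_iff₀ hμ0]
      rcases le_total t (1 / μ) with h | h
      · rw [hm, min_eq_left h]
        have h1 : c ≤ t * (n : ℝ) := min_le_left _ _
        have h2 : (n : ℝ) ≤ μ := by rw [hμ]; nlinarith [Nat.cast_nonneg (α := ℝ) k]
        nlinarith
      · rw [hm, min_eq_right h]
        have : (1 / μ) * μ = 1 := by field_simp
        rw [this]; exact hc1
    have step1 : (∫ r in Set.Ioo (0 : ℝ) m, r ^ (γ - 1) * Real.exp (-r * μ))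
        ≤ ∫ r in Set.Ioo (0 : ℝ) t, r ^ (γ - 1) * Real.exp (-r * μ) := by
      refine setIntegral_mono_set ((hint k).mono_set Set.Ioo_subset_Ioi_self) ?_ ?_
      · filter_upwards [self_mem_ae_restrict measurableSet_Ioo] with r hr
        exact hnonneg r hr.1
      · exact Filter.Eventually.of_forall fun r hr => ⟨hr.1, lt_of_lt_of_le hr.2 hmt⟩
    have step2 : (∫ r in Set.Ioo (0 : ℝ) m, Real.exp (-1) * r ^ (γ - 1))
        ≤ ∫ r in Set.Ioo (0 : ℝ) m, r ^ (γ - 1) * Real.exp (-r * μ) := by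
      refine setIntegral_mono_on ?_ ?_ measurableSet_Ioo fun r hr => ?_
      · refine Integrable.const_mul ?_ _
        have h := intervalIntegral.intervalIntegrable_rpow'
          (by linarith : (-1 : ℝ) < γ - 1) (a := 0) (b := m)
        rwa [intervalIntegrable_iff_integrableOn_Ioo_of_le hm0.le] at h
      · exact (hint k).mono_set Set.Ioo_subset_Ioi_self
      · have hrμ : r * μ ≤ 1 := by
          have h1 : r ≤ 1 / μ := le_trans hr.2.le (min_le_right _ _)
          calc r * μ ≤ (1 / μ) * μ := by nlinarith
            _ = 1 := by field_simp
        have hex : Real.exp (-1) ≤ Real.exp (-r * μ) :=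
          Real.exp_le_exp.mpr (by linarith)
        have hr0 : (0 : ℝ) ≤ r ^ (γ - 1) := Real.rpow_nonneg hr.1.le _
        nlinarith
    have step3 : (∫ r in Set.Ioo (0 : ℝ) m, Real.exp (-1) * r ^ (γ - 1))
        = Real.exp (-1) * (m ^ γ / γ) := by
      rw [integral_const_mul]
      congr 1
      have h := integral_rpow (a := 0) (b := m)
        (Or.inl (by linarith : (-1 : ℝ) < γ - 1))
      rw [intervalIntegral.integral_of_le hm0.le, integral_Ioc_eq_integral_Ioo] at h
      rw [h, Real.zero_rpow (by linarith : γ - 1 + 1 ≠ 0)]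
      ring_nf
    have hmγ : c ^ γ * μ ^ (-γ) ≤ m ^ γ := by
      have h1 : (c / μ) ^ γ ≤ m ^ γ :=
        Real.rpow_le_rpow (by positivity) hmge hγ.le
      calc c ^ γ * μ ^ (-γ) = (c / μ) ^ γ := by
            rw [Real.div_rpow hcpos.le hμ0.le, Real.rpow_neg hμ0.le, div_eq_mul_inv]
        _ ≤ m ^ γ := h1
    calc (1 / Real.Gamma γ) * (Real.exp (-1) * c ^ γ / γ) * μ ^ (-γ)
        = (1 / Real.Gamma γ) * (Real.exp (-1) * ((c ^ γ * μ ^ (-γ)) / γ)) := by ring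
      _ ≤ (1 / Real.Gamma γ) * (Real.exp (-1) * (m ^ γ / γ)) := by
          apply mul_le_mul_of_nonneg_left ?_ (by positivity)
          apply mul_le_mul_of_nonneg_left ?_ (Real.exp_pos _).le
          gcongr
      _ ≤ (1 / Real.Gamma γ) * ∫ r in Set.Ioo (0 : ℝ) t,
            r ^ (γ - 1) * Real.exp (-r * μ) := by
          apply mul_le_mul_of_nonneg_left ?_ (by positivity)
          rw [← step3]
          exact le_trans step2 step1
  · -- upper bound
    rw [key k, one_mul]
    have hle : (∫ r in Set.Ioo (0 : ℝ) t, r ^ (γ - 1) * Real.exp (-r * μ))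
        ≤ ∫ r in Set.Ioi (0 : ℝ), r ^ (γ - 1) * Real.exp (-r * μ) := by
      refine setIntegral_mono_set (hint k) ?_ ?_
      · filter_upwards [self_mem_ae_restrict measurableSet_Ioi] with r hr
        exact hnonneg r hr
      · exact Filter.Eventually.of_forall fun r hr => hr.1
    have hval : (∫ r in Set.Ioi (0 : ℝ), r ^ (γ - 1) * Real.exp (-r * μ))
        = (1 / μ) ^ γ * Real.Gamma γ := by
      rw [← Real.integral_rpow_mul_exp_neg_mul_Ioi hγ hμ0]
      refine setIntegral_congr_fun measurableSet_Ioi fun r hr => ?_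
      rw [mul_comm μ r, ← neg_mul]
    calc (1 / Real.Gamma γ) * ∫ r in Set.Ioo (0 : ℝ) t, r ^ (γ - 1) * Real.exp (-r * μ)
        ≤ (1 / Real.Gamma γ) * ((1 / μ) ^ γ * Real.Gamma γ) := by
          rw [← hval]; exact mul_le_mul_of_nonneg_left hle (by positivity)
      _ = μ ^ (-γ) := by
          rw [Real.rpow_neg hμ0.le, Real.div_rpow zero_le_one hμ0.le, Real.one_rpow]
          have h1 := hΓ.ne'
          have h2 := (Real.rpow_pos_of_pos hμ0 γ).ne'
          field_simp
end

section
/- Fix real numbers s with 0 < s < 1 and λ > 0, and for ρ > 0 define u(ρ) = ρ^s · (1/Γ(s)) ∫₀^∞ e^{−ρ²/(4τ)} e^{−τ λ²} τ^{−s/2 − 1} dτ. Then u is twice differentiable on (0, ∞) and satisfies u''(ρ) + ((1−s)/ρ) · u'(ρ) − λ² u(ρ) = 0 for every ρ > 0. -/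
open MeasureTheory Real Set Filter Topology

noncomputable def auxF (s : ℝ) (n : ℕ) (x t : ℝ) : ℝ :=
  Real.exp (-1/(4*t)) * Real.exp (-x*t) * t ^ ((n : ℝ) - s/2 - 1)

lemma auxF_nonneg (s : ℝ) (n : ℕ) (x : ℝ) {t : ℝ} (ht : 0 < t) : 0 ≤ auxF s n x t := by
  unfold auxF; positivity

lemma aux_exp_bound {t : ℝ} (ht : 0 < t) : Real.exp (-1/(4*t)) ≤ 64 * t^2 := by
  set E := Real.exp (1/(8*t)) with hE
  have h1 : 1/(8*t) ≤ E := by linarith [Real.add_one_le_exp (1/(8*t))]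
  have h2 : Real.exp (1/(4*t)) = E * E := by
    rw [hE, ← Real.exp_add]; congr 1; field_simp; ring
  have h3 : Real.exp (-1/(4*t)) * (E * E) = 1 := by
    rw [← h2, ← Real.exp_add]; ring_nf; exact Real.exp_zero
  have h6 : 1 ≤ E * (8*t) := (div_le_iff₀ (by positivity)).1 h1
  have h7 : (1:ℝ) ≤ (E*(8*t))*(E*(8*t)) := by nlinarith
  have h4 : (0:ℝ) ≤ Real.exp (-1/(4*t)) := (Real.exp_pos _).le
  nlinarith [h7, h3, h4]

lemma auxF_le {s : ℝ} (n : ℕ) {x t x' : ℝ} (ht : 0 < t) (hx : x' ≤ x) :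
    auxF s n x t ≤ 64 * (t ^ ((n:ℝ) + 1 - s/2) * Real.exp (-x'*t)) := by
  unfold auxF
  have h2 : t ^ ((n : ℝ) + 1 - s/2) = t^2 * t ^ ((n : ℝ) - s/2 - 1) := by
    rw [← Real.rpow_two, ← Real.rpow_add ht]; ring_nf
  rw [h2]
  calc Real.exp (-1/(4*t)) * Real.exp (-x*t) * t ^ ((n : ℝ) - s/2 - 1)
      ≤ (64*t^2) * Real.exp (-x'*t) * t ^ ((n : ℝ) - s/2 - 1) := by
        gcongr
        exact aux_exp_bound ht
    _ = 64 * (t^2 * t ^ ((n : ℝ) - s/2 - 1) * Real.exp (-x'*t)) := by ring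

lemma aux_integrable_rpow_exp (c : ℝ) {x : ℝ} (hc : -1 < c) (hx : 0 < x) :
    IntegrableOn (fun t : ℝ => t ^ c * Real.exp (-x * t)) (Ioi 0) := by
  have h := integrableOn_rpow_mul_exp_neg_mul_rpow hc zero_lt_one hx
  refine h.congr_fun (fun t ht => ?_) measurableSet_Ioi
  simp only [Real.rpow_one]

lemma auxF_continuousOn (s : ℝ) (n : ℕ) (x : ℝ) :
    ContinuousOn (fun t => auxF s n x t) (Ioi 0) := by
  unfold auxF
  refine ContinuousOn.mul (ContinuousOn.mul ?_ ?_) ?_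
  · exact Real.continuous_exp.comp_continuousOn
      (continuousOn_const.div ((continuous_const.mul continuous_id).continuousOn)
        (fun t ht => by simp at ht; positivity))
  · exact (Real.continuous_exp.comp (continuous_const.mul continuous_id)).continuousOn
  · exact fun t ht =>
      (Real.continuousAt_rpow_const t _ (Or.inl (ne_of_gt ht))).continuousWithinAt

lemma auxF_aesm (s : ℝ) (n : ℕ) (x : ℝ) :
    AEStronglyMeasurable (fun t => auxF s n x t) (volume.restrict (Ioi 0)) :=
  (auxF_continuousOn s n x).aestronglyMeasurable measurableSet_Ioi

lemma auxF_integrableOn {s : ℝ} (hs1 : s < 1) (n : ℕ) {x : ℝ} (hx : 0 < x) :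
    IntegrableOn (fun t => auxF s n x t) (Ioi 0) := by
  have hb : IntegrableOn (fun t : ℝ => 64 * (t ^ ((n:ℝ)+1-s/2) * Real.exp (-x * t))) (Ioi 0) :=
    (aux_integrable_rpow_exp _ (by push_cast; linarith) hx).const_mul 64
  refine Integrable.mono' hb (auxF_aesm s n x) ?_
  rw [ae_restrict_iff' measurableSet_Ioi]
  filter_upwards with t ht
  rw [Real.norm_eq_abs, abs_of_nonneg (auxF_nonneg s n x ht)]
  exact auxF_le n ht le_rfl

lemma auxF_hasDerivAt (s : ℝ) (n : ℕ) {t : ℝ} (ht : 0 < t) (x : ℝ) :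
    HasDerivAt (fun y => auxF s n y t) (-auxF s (n+1) x t) x := by
  have h0 : HasDerivAt (fun y : ℝ => -y*t) (-t) x := by
    simpa using (hasDerivAt_id x).neg.mul_const t
  have h : HasDerivAt (fun y : ℝ => Real.exp (-y*t)) (Real.exp (-x*t) * (-t)) x := h0.exp
  have h2 := (h.const_mul (Real.exp (-1/(4*t)))).mul_const (t ^ ((n : ℝ) - s/2 - 1))
  refine h2.congr_deriv ?_
  unfold auxF
  have hsp : t ^ (((n:ℕ)+1 : ℝ) - s/2 - 1) = t ^ ((n : ℝ) - s/2 - 1) * t := by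
    rw [show ((n:ℕ)+1 : ℝ) - s/2 - 1 = ((n : ℝ) - s/2 - 1) + 1 by ring,
      Real.rpow_add ht, Real.rpow_one]
  push_cast
  rw [hsp]
  ring

lemma auxI_hasDerivAt {s : ℝ} (hs1 : s < 1) (n : ℕ) {x₀ : ℝ} (hx : 0 < x₀) :
    HasDerivAt (fun x => ∫ t in Ioi 0, auxF s n x t)
      (∫ t in Ioi 0, -auxF s (n+1) x₀ t) x₀ := by
  refine (hasDerivAt_integral_of_dominated_loc_of_deriv_le (𝕜 := ℝ)
    (μ := volume.restrict (Ioi 0)) (x₀ := x₀)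
    (F := fun x t => auxF s n x t) (F' := fun x t => -auxF s (n+1) x t)
    (bound := fun t => 64 * (t ^ ((n:ℝ)+2-s/2) * Real.exp (-(x₀/2) * t)))
    (s := Metric.ball x₀ (x₀/2)) (Metric.ball_mem_nhds x₀ (by positivity))
    (Filter.Eventually.of_forall fun x => auxF_aesm s n x)
    (auxF_integrableOn hs1 n hx)
    ((auxF_aesm s (n+1) x₀).neg)
    ?_ ?_ ?_).2
  · rw [ae_restrict_iff' measurableSet_Ioi]
    filter_upwards with t ht x hxball
    have hxgt : x₀/2 ≤ x := by
      rw [Metric.mem_ball, Real.dist_eq, abs_lt] at hxball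
      linarith
    rw [norm_neg, Real.norm_eq_abs, abs_of_nonneg (auxF_nonneg s (n+1) x ht)]
    have hle := auxF_le (s := s) (x' := x₀/2) (n+1) ht hxgt
    convert hle using 4
    push_cast
    ring
  · exact (aux_integrable_rpow_exp _ (by push_cast; linarith) (by positivity)).const_mul 64
  · rw [ae_restrict_iff' measurableSet_Ioi]
    filter_upwards with t ht x _
    exact auxF_hasDerivAt s n ht x

-- derivative in t of auxF s 2 x
lemma auxF2_hasDerivAt_t {s x : ℝ} {t : ℝ} (ht : 0 < t) :
    HasDerivAt (fun t => -4 * auxF s 2 x t)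
      (4*x * auxF s 2 x t - (4-2*s) * auxF s 1 x t - auxF s 0 x t) t := by
  have e1 : (fun t : ℝ => -1/(4*t)) = fun t : ℝ => (-1/4) * t⁻¹ := by
    funext t; rw [div_eq_mul_inv, mul_inv]; ring
  have hA : HasDerivAt (fun t : ℝ => -1/(4*t)) ((-1/4) * -(t^2)⁻¹) t :=
    e1 ▸ ((hasDerivAt_inv ht.ne').const_mul (-1/4))
  have hE1 := hA.exp
  have hB : HasDerivAt (fun t : ℝ => -x*t) (-x) t := by
    simpa using (hasDerivAt_id t).const_mul (-x)
  have hE2 := hB.exp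
  have hP : HasDerivAt (fun t : ℝ => t ^ (((2:ℕ) : ℝ) - s/2 - 1))
      ((((2:ℕ) : ℝ) - s/2 - 1) * t ^ ((((2:ℕ) : ℝ) - s/2 - 1) - 1)) t :=
    Real.hasDerivAt_rpow_const (Or.inl ht.ne')
  have hD := ((hE1.mul hE2).mul hP).const_mul (-4)
  refine hD.congr_deriv ?_
  unfold auxF
  have r1 : t ^ ((((2:ℕ) : ℝ) - s/2 - 1) - 1) = t ^ (((1:ℕ) : ℝ) - s/2 - 1) := by
    congr 1; push_cast; ring
  have r2 : t ^ (((2:ℕ) : ℝ) - s/2 - 1) = t ^ (((0:ℕ) : ℝ) - s/2 - 1) * t^2 := by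
    rw [← Real.rpow_two, ← Real.rpow_add ht]; congr 1; push_cast; ring
  rw [r1, r2]
  have ht2 : (t^2 : ℝ) ≠ 0 := by positivity
  simp only [Pi.mul_apply]
  field_simp
  ring

lemma auxF2_zero {s x : ℝ} (hs1 : s < 1) : auxF s 2 x 0 = 0 := by
  unfold auxF
  rw [Real.zero_rpow (by push_cast; intro h; linarith [h] : (((2:ℕ):ℝ) - s/2 - 1) ≠ 0)]
  ring

lemma aux_FTC {s : ℝ} (hs : 0 < s) (hs1 : s < 1) {x : ℝ} (hx : 0 < x) :
    ∫ t in Ioi 0, (4*x * auxF s 2 x t - (4-2*s) * auxF s 1 x t - auxF s 0 x t) = 0 := by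
  have hrw : ∫ t in Ioi 0, (4*x * auxF s 2 x t - (4-2*s) * auxF s 1 x t - auxF s 0 x t)
      = 0 - (fun t => -4 * auxF s 2 x t) 0 := by
    apply integral_Ioi_of_hasDerivAt_of_tendsto
      (f := fun t => -4 * auxF s 2 x t)
      (f' := fun t => 4*x * auxF s 2 x t - (4-2*s) * auxF s 1 x t - auxF s 0 x t)
      (m := 0) (a := 0)
    · -- ContinuousWithinAt at 0
      have hsq : Tendsto (fun t => 4 * auxF s 2 x t) (𝓝[Ici 0] 0) (𝓝 0) := by
        apply squeeze_zero' (g := fun t : ℝ => 256 * t ^ ((3:ℝ) - s/2))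
        · filter_upwards [self_mem_nhdsWithin] with t ht
          rcases eq_or_lt_of_le (mem_Ici.1 ht) with h | h
          · rw [← h, auxF2_zero hs1]; norm_num
          · have := auxF_nonneg s 2 x h; linarith
        · filter_upwards [self_mem_nhdsWithin] with t ht
          rcases eq_or_lt_of_le (mem_Ici.1 ht) with h | h
          · rw [← h, auxF2_zero hs1, Real.zero_rpow (by intro h'; linarith)]; norm_num
          · have h1 := auxF_le (s := s) (x := x) (x' := x) 2 h le_rfl
            have h2 : Real.exp (-x*t) ≤ 1 := by
              rw [Real.exp_le_one_iff]; nlinarith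
            have h3 : (0:ℝ) < t ^ (((2:ℕ):ℝ) + 1 - s/2) := Real.rpow_pos_of_pos h _
            have h5 : t ^ (((2:ℕ):ℝ) + 1 - s/2) = t ^ ((3:ℝ) - s/2) := by
              congr 1; push_cast; ring
            rw [h5] at h1 h3
            nlinarith [Real.exp_pos (-x*t)]
        · have hc : Tendsto (fun t : ℝ => t ^ ((3:ℝ) - s/2)) (𝓝 0) (𝓝 ((0:ℝ) ^ ((3:ℝ) - s/2))) :=
            (Real.continuousAt_rpow_const 0 _ (Or.inr (by linarith))).tendsto
          rw [Real.zero_rpow (by intro h'; linarith)] at hc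
          have := (hc.mono_left (nhdsWithin_le_nhds (s := Ici (0:ℝ)))).const_mul (256:ℝ)
          simpa using this
      have : Tendsto (fun t => -4 * auxF s 2 x t) (𝓝[Ici 0] 0) (𝓝 0) := by
        have := hsq.neg
        simp only [neg_zero] at this
        apply this.congr
        intro t; ring
      unfold ContinuousWithinAt
      simpa [auxF2_zero hs1] using this
    · intro t ht
      exact auxF2_hasDerivAt_t (mem_Ioi.1 ht)
    · refine (((auxF_integrableOn hs1 2 hx).const_mul (4*x)).sub
        ((auxF_integrableOn hs1 1 hx).const_mul (4-2*s))).sub (auxF_integrableOn hs1 0 hx)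
    · -- tendsto at top
      have hsq : Tendsto (fun t => 4 * auxF s 2 x t) atTop (𝓝 0) := by
        apply squeeze_zero' (g := fun t : ℝ => 256 * (t ^ ((3:ℝ) - s/2) * Real.exp (-x*t)))
        · filter_upwards [eventually_gt_atTop (0:ℝ)] with t ht
          have := auxF_nonneg s 2 x ht; linarith
        · filter_upwards [eventually_gt_atTop (0:ℝ)] with t ht
          have h1 := auxF_le (s := s) (x := x) (x' := x) 2 ht le_rfl
          have h5 : t ^ (((2:ℕ):ℝ) + 1 - s/2) = t ^ ((3:ℝ) - s/2) := by
            congr 1; push_cast; ring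
          rw [h5] at h1
          linarith
        · have := (tendsto_rpow_mul_exp_neg_mul_atTop_nhds_zero ((3:ℝ) - s/2) x hx).const_mul (256:ℝ)
          simp only [mul_zero] at this
          apply this.congr
          intro t
          ring_nf
      have := hsq.neg
      simp only [neg_zero] at this
      apply this.congr
      intro t; ring
  rw [hrw]
  simp [auxF2_zero hs1]

lemma aux_subst {s lam : ℝ} {ρ : ℝ} (hρ : 0 < ρ) :
    ρ ^ s * ((1 / Real.Gamma s) * ∫ τ in Ioi (0:ℝ),
        Real.exp (-ρ ^ 2 / (4 * τ)) * Real.exp (-τ * lam ^ 2) * τ ^ (-s / 2 - 1))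
    = (1 / Real.Gamma s) * ∫ t in Ioi (0:ℝ), auxF s 0 (lam^2 * ρ^2) t := by
  have hρ2 : (0:ℝ) < ρ^2 := by positivity
  have hsub := integral_comp_mul_left_Ioi
    (fun τ => Real.exp (-ρ ^ 2 / (4 * τ)) * Real.exp (-τ * lam ^ 2) * τ ^ (-s / 2 - 1))
    0 hρ2
  rw [mul_zero] at hsub
  have hsub2 : (∫ τ in Ioi (0:ℝ),
        Real.exp (-ρ ^ 2 / (4 * τ)) * Real.exp (-τ * lam ^ 2) * τ ^ (-s / 2 - 1))
      = ρ^2 * ∫ t in Ioi (0:ℝ), Real.exp (-ρ ^ 2 / (4 * (ρ^2*t))) *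
          Real.exp (-(ρ^2*t) * lam ^ 2) * (ρ^2*t) ^ (-s / 2 - 1) := by
    rw [show (∫ t in Ioi (0:ℝ), Real.exp (-ρ ^ 2 / (4 * (ρ^2*t))) *
          Real.exp (-(ρ^2*t) * lam ^ 2) * (ρ^2*t) ^ (-s / 2 - 1))
        = ∫ t in Ioi (0:ℝ), (fun τ => Real.exp (-ρ ^ 2 / (4 * τ)) *
            Real.exp (-τ * lam ^ 2) * τ ^ (-s / 2 - 1)) (ρ^2 * t) from rfl,
      hsub, smul_eq_mul, ← mul_assoc, mul_inv_cancel₀ hρ2.ne', one_mul]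
  have hcongr : ∫ t in Ioi (0:ℝ),
      Real.exp (-ρ ^ 2 / (4 * (ρ^2 * t))) * Real.exp (-(ρ^2*t) * lam ^ 2) * (ρ^2*t) ^ (-s / 2 - 1)
      = ∫ t in Ioi (0:ℝ), (ρ^2) ^ (-s/2-1) * auxF s 0 (lam^2 * ρ^2) t := by
    apply setIntegral_congr_fun measurableSet_Ioi
    intro t ht
    have ht' : (0:ℝ) < t := ht
    dsimp only
    unfold auxF
    rw [Real.mul_rpow hρ2.le ht'.le]
    have e1 : -ρ ^ 2 / (4 * (ρ^2 * t)) = -1/(4*t) := by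
      field_simp
    have e2 : -(ρ^2*t) * lam ^ 2 = -(lam^2 * ρ^2)*t := by ring
    have e3 : ((0:ℕ) : ℝ) - s/2 - 1 = -s/2 - 1 := by push_cast; ring
    rw [e1, e2, e3]
    ring
  rw [hsub2, hcongr, MeasureTheory.integral_const_mul]
  have hpow : ρ ^ s * (ρ^2 * ((ρ^2:ℝ) ^ (-s/2-1))) = 1 := by
    rw [← Real.rpow_natCast ρ 2, ← Real.rpow_mul hρ.le, ← Real.rpow_add hρ, ← Real.rpow_add hρ]
    rw [show s + ((2:ℕ) + (2:ℕ) * (-s/2-1) : ℝ) = 0 by push_cast; ring, Real.rpow_zero]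
  calc ρ ^ s * ((1 / Real.Gamma s) * (ρ^2 * ((ρ^2) ^ (-s/2-1) *
        ∫ t in Ioi (0:ℝ), auxF s 0 (lam^2 * ρ^2) t)))
      = (ρ ^ s * (ρ^2 * ((ρ^2) ^ (-s/2-1)))) * ((1 / Real.Gamma s) *
        ∫ t in Ioi (0:ℝ), auxF s 0 (lam^2 * ρ^2) t) := by ring
    _ = _ := by rw [hpow]; ring


/-- Scalar version of the extension problem for fractional powers of the Laplacian:
`u(ρ) = ρ^s Γ(s)⁻¹ ∫₀^∞ e^{−ρ²/(4τ)} e^{−τλ²} τ^{−s/2−1} dτ` is twice differentiable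
on `(0,∞)` and satisfies `u'' + ((1−s)/ρ) u' − λ² u = 0` there. -/
theorem stmt7 (s lam : ℝ) (hs : 0 < s) (hs1 : s < 1) (hlam : 0 < lam)
    (u : ℝ → ℝ)
    (hu : ∀ ρ : ℝ, u ρ = ρ ^ s * ((1 / Real.Gamma s) *
      ∫ τ in Set.Ioi (0 : ℝ),
        Real.exp (-ρ ^ 2 / (4 * τ)) * Real.exp (-τ * lam ^ 2) * τ ^ (-s / 2 - 1))) :
    ∀ ρ : ℝ, 0 < ρ →
      DifferentiableAt ℝ u ρ ∧ DifferentiableAt ℝ (deriv u) ρ ∧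
      deriv (deriv u) ρ + ((1 - s) / ρ) * deriv u ρ - lam ^ 2 * u ρ = 0 := by
  intro ρ hρ
  set v : ℝ → ℝ := fun r => (1 / Real.Gamma s) * ∫ t in Ioi (0:ℝ), auxF s 0 (lam^2 * r^2) t
    with hv
  set w : ℝ → ℝ := fun r => (1 / Real.Gamma s) *
      (-(∫ t in Ioi (0:ℝ), auxF s 1 (lam^2 * r^2) t) * (lam^2 * (2*r))) with hw
  -- u agrees with v on a neighborhood of any positive point
  have hueq : ∀ r : ℝ, 0 < r → u =ᶠ[𝓝 r] v := by
    intro r hr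
    filter_upwards [isOpen_Ioi.mem_nhds (mem_Ioi.2 hr)] with r' hr'
    rw [hu r', hv]
    exact aux_subst (mem_Ioi.1 hr')
  -- derivative of v at any positive point
  have hq : ∀ r : ℝ, HasDerivAt (fun r' : ℝ => lam^2 * r'^2) (lam^2 * (2*r)) r := by
    intro r
    exact ((hasDerivAt_pow 2 r).const_mul (lam^2)).congr_deriv (by norm_num)
  have hJ : ∀ x : ℝ, 0 < x → HasDerivAt (fun x => ∫ t in Ioi (0:ℝ), auxF s 0 x t)
      (-(∫ t in Ioi (0:ℝ), auxF s 1 x t)) x := by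
    intro x hx
    have := auxI_hasDerivAt hs1 0 hx
    rwa [integral_neg] at this
  have hJ1 : ∀ x : ℝ, 0 < x → HasDerivAt (fun x => -(∫ t in Ioi (0:ℝ), auxF s 1 x t))
      (∫ t in Ioi (0:ℝ), auxF s 2 x t) x := by
    intro x hx
    have := (auxI_hasDerivAt hs1 1 hx).neg
    rw [integral_neg, neg_neg] at this
    exact this
  have hvd : ∀ r : ℝ, 0 < r → HasDerivAt v (w r) r := by
    intro r hr
    have hx : (0:ℝ) < lam^2 * r^2 := by positivity
    have hcomp := (hJ _ hx).comp r (hq r)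
    exact (hcomp.const_mul (1 / Real.Gamma s)).congr_deriv (by rw [hw])
  -- second derivative data
  have hx : (0:ℝ) < lam^2 * ρ^2 := by positivity
  have hwd : HasDerivAt w
      ((1 / Real.Gamma s) * ((∫ t in Ioi (0:ℝ), auxF s 2 (lam^2 * ρ^2) t) * (lam^2 * (2*ρ)) *
        (lam^2 * (2*ρ)) +
        -(∫ t in Ioi (0:ℝ), auxF s 1 (lam^2 * ρ^2) t) * (lam^2 * 2))) ρ := by
    have h1 : HasDerivAt (fun r : ℝ => -(∫ t in Ioi (0:ℝ), auxF s 1 (lam^2 * r^2) t))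
        ((∫ t in Ioi (0:ℝ), auxF s 2 (lam^2 * ρ^2) t) * (lam^2 * (2*ρ))) ρ :=
      (hJ1 _ hx).comp (h₂ := fun x => -(∫ t in Ioi (0:ℝ), auxF s 1 x t)) ρ (hq ρ)
    have h2 : HasDerivAt (fun r : ℝ => lam^2 * (2*r)) (lam^2 * 2) ρ := by
      simpa using ((hasDerivAt_id ρ).const_mul (2:ℝ)).const_mul (lam^2)
    have h3 := (h1.mul h2).const_mul (1 / Real.Gamma s)
    exact h3.congr_deriv (by ring)
  -- derivatives of u
  have hud : HasDerivAt u (w ρ) ρ :=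
    (hvd ρ hρ).congr_of_eventuallyEq (hueq ρ hρ)
  have hderiv_u : deriv u ρ = w ρ := hud.deriv
  have hderiv_eq : deriv u =ᶠ[𝓝 ρ] w := by
    filter_upwards [isOpen_Ioi.mem_nhds (mem_Ioi.2 hρ)] with r hr
    exact ((hvd r (mem_Ioi.1 hr)).congr_of_eventuallyEq (hueq r (mem_Ioi.1 hr))).deriv
  have hud2 : HasDerivAt (deriv u)
      ((1 / Real.Gamma s) * ((∫ t in Ioi (0:ℝ), auxF s 2 (lam^2 * ρ^2) t) * (lam^2 * (2*ρ)) *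
        (lam^2 * (2*ρ)) +
        -(∫ t in Ioi (0:ℝ), auxF s 1 (lam^2 * ρ^2) t) * (lam^2 * 2))) ρ :=
    hwd.congr_of_eventuallyEq hderiv_eq
  refine ⟨hud.differentiableAt, hud2.differentiableAt, ?_⟩
  rw [hud2.deriv, hderiv_u, hu ρ, aux_subst hρ]
  -- now pure algebra plus the FTC identity
  have hFTC := aux_FTC hs hs1 hx
  have hInt2 := auxF_integrableOn hs1 2 hx
  have hInt1 := auxF_integrableOn hs1 1 hx
  have hInt0 := auxF_integrableOn hs1 0 hx
  have hexp : ∫ t in Ioi (0:ℝ), (4*(lam^2*ρ^2) * auxF s 2 (lam^2*ρ^2) t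
      - (4-2*s) * auxF s 1 (lam^2*ρ^2) t - auxF s 0 (lam^2*ρ^2) t)
      = 4*(lam^2*ρ^2) * (∫ t in Ioi (0:ℝ), auxF s 2 (lam^2*ρ^2) t)
        - (4-2*s) * (∫ t in Ioi (0:ℝ), auxF s 1 (lam^2*ρ^2) t)
        - ∫ t in Ioi (0:ℝ), auxF s 0 (lam^2*ρ^2) t := by
    have hA : IntegrableOn (fun t => 4*(lam^2*ρ^2) * auxF s 2 (lam^2*ρ^2) t
        - (4-2*s) * auxF s 1 (lam^2*ρ^2) t) (Ioi 0) := by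
      exact (hInt2.const_mul _).sub (hInt1.const_mul _)
    have hA2 : IntegrableOn (fun t => 4*(lam^2*ρ^2) * auxF s 2 (lam^2*ρ^2) t) (Ioi 0) :=
      hInt2.const_mul _
    have hA1 : IntegrableOn (fun t => (4-2*s) * auxF s 1 (lam^2*ρ^2) t) (Ioi 0) :=
      hInt1.const_mul _
    rw [integral_sub hA hInt0, integral_sub hA2 hA1,
      MeasureTheory.integral_const_mul, MeasureTheory.integral_const_mul]
  rw [hexp] at hFTC
  have hρ' : ρ ≠ 0 := hρ.ne'
  have hΓ : (0:ℝ) < Real.Gamma s := Real.Gamma_pos_of_pos hs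
  rw [hw]
  field_simp
  linear_combination lam^2 * hFTC
end

section
/- Fix real numbers s with 0 < s < 1 and λ > 0, and for ρ > 0 define u(ρ) = ρ^s · (1/Γ(s)) ∫₀^∞ e^{−ρ²/(4τ)} e^{−τ λ²} τ^{−s/2 − 1} dτ. Then ρ^{1−s} u'(ρ) converges as ρ → 0⁺, and its limit equals −(2 Γ(1 − s/2)/Γ(s)) · λ^s. -/
open MeasureTheory Real Filter Set

namespace Stmt8Aux

/-- `e^{-1/(4σ)} ≤ 64 σ²` for `σ > 0`. -/
lemma exp_bound {σ : ℝ} (hσ : 0 < σ) : Real.exp (-(1 / (4 * σ))) ≤ 64 * σ ^ (2:ℝ) := by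
  set y : ℝ := 1 / (4 * σ) with hy
  have hy0 : 0 < y := by positivity
  have h1 : y / 2 ≤ Real.exp (y / 2) := (Real.add_one_le_exp (y/2)).trans' (by linarith)
  have h2 : (y/2) * (y/2) ≤ Real.exp (y/2) * Real.exp (y/2) :=
    mul_le_mul h1 h1 (by positivity) (Real.exp_pos _).le
  rw [← Real.exp_add] at h2
  have h3 : y^2 / 4 ≤ Real.exp y := by
    have : y/2 + y/2 = y := by ring
    rw [this] at h2; nlinarith
  have h4 : Real.exp (-y) ≤ 4 / y^2 := by
    rw [Real.exp_neg]
    rw [inv_le_iff_one_le_mul₀ (Real.exp_pos y)] at *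
    · rw [div_mul_eq_mul_div, le_div_iff₀ (by positivity)]
      nlinarith [Real.exp_pos y]
  have h5 : 4 / y^2 = 64 * σ^2 := by
    rw [hy]; field_simp; ring
  have h6 : σ ^ (2:ℝ) = σ ^ (2:ℕ) := by
    rw [← Real.rpow_natCast σ 2]; norm_num
  rw [h6]; linarith

lemma integrable_pow_exp {p x : ℝ} (hp : -1 < p) (hx : 0 < x) :
    IntegrableOn (fun t : ℝ => t ^ p * Real.exp (-(x * t))) (Ioi 0) := by
  have := integrableOn_rpow_mul_exp_neg_mul_rpow hp one_pos hx
  refine this.congr_fun (fun t ht => ?_) measurableSet_Ioi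
  dsimp only
  rw [Real.rpow_one, neg_mul]

lemma contOn (x p : ℝ) :
    ContinuousOn (fun σ : ℝ => Real.exp (-(1/(4*σ))) * Real.exp (-(x*σ)) * σ ^ p) (Ioi 0) := by
  apply ContinuousOn.mul
  · apply ContinuousOn.mul
    · apply Real.continuous_exp.comp_continuousOn
      apply ContinuousOn.neg
      apply ContinuousOn.div continuousOn_const (by fun_prop)
      intro σ hσ
      have : (0:ℝ) < σ := hσ
      positivity
    · fun_prop
  · exact fun σ hσ => (Real.continuousAt_rpow_const σ p (Or.inl (ne_of_gt hσ))).continuousWithinAt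

lemma meas_aux (x p : ℝ) :
    AEStronglyMeasurable (fun σ : ℝ => Real.exp (-(1/(4*σ))) * Real.exp (-(x*σ)) * σ ^ p)
      (volume.restrict (Ioi 0)) :=
  (contOn x p).aestronglyMeasurable measurableSet_Ioi

lemma integrable_master {p x : ℝ} (hp : -3 < p) (hx : 0 < x) :
    IntegrableOn (fun σ : ℝ => Real.exp (-(1/(4*σ))) * Real.exp (-(x*σ)) * σ ^ p) (Ioi 0) := by
  have hint : Integrable (fun t : ℝ => 64 * (t ^ (p+2) * Real.exp (-(x*t))))
      (volume.restrict (Ioi 0)) := (integrable_pow_exp (by linarith) hx).const_mul 64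
  refine hint.mono' (meas_aux x p) ?_
  filter_upwards [ae_restrict_mem measurableSet_Ioi] with σ hσ
  have hσ0 : (0:ℝ) < σ := hσ
  have h2 : σ ^ (2:ℝ) * σ ^ p = σ ^ (p+2) := by
    rw [← Real.rpow_add hσ0]; ring_nf
  have hb := exp_bound hσ0
  have hnn : (0:ℝ) ≤ Real.exp (-(x*σ)) * σ ^ p := by positivity
  calc ‖Real.exp (-(1/(4*σ))) * Real.exp (-(x*σ)) * σ ^ p‖
      = Real.exp (-(1/(4*σ))) * (Real.exp (-(x*σ)) * σ ^ p) := by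
        rw [Real.norm_eq_abs, abs_of_nonneg (by positivity)]; ring
    _ ≤ (64 * σ ^ (2:ℝ)) * (Real.exp (-(x*σ)) * σ ^ p) :=
        mul_le_mul_of_nonneg_right hb hnn
    _ = 64 * (σ ^ (2:ℝ) * σ ^ p * Real.exp (-(x*σ))) := by ring
    _ = 64 * (σ ^ (p+2) * Real.exp (-(x*σ))) := by rw [h2]

noncomputable def FF (s x : ℝ) : ℝ :=
  ∫ σ in Ioi (0:ℝ), Real.exp (-(1/(4*σ))) * Real.exp (-(x*σ)) * σ ^ (-s/2-1)

noncomputable def GG (s x : ℝ) : ℝ :=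
  ∫ σ in Ioi (0:ℝ), Real.exp (-(1/(4*σ))) * Real.exp (-(x*σ)) * σ ^ (-s/2)

noncomputable def HH (s x : ℝ) : ℝ :=
  ∫ t in Ioi (0:ℝ), Real.exp (-(x/(4*t))) * Real.exp (-t) * t ^ (-s/2)

lemma hasDerivAt_FF {s x : ℝ} (hs : 0 < s) (hs1 : s < 1) (hx : 0 < x) :
    HasDerivAt (FF s) (-(GG s x)) x := by
  have key := hasDerivAt_integral_of_dominated_loc_of_deriv_le (μ := volume.restrict (Ioi 0))
    (F := fun x σ => Real.exp (-(1/(4*σ))) * Real.exp (-(x*σ)) * σ ^ (-s/2-1))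
    (F' := fun x σ => -(Real.exp (-(1/(4*σ))) * Real.exp (-(x*σ)) * σ ^ (-s/2)))
    (x₀ := x) (bound := fun σ => Real.exp (-(1/(4*σ))) * Real.exp (-(x/2*σ)) * σ ^ (-s/2))
    (s := Metric.ball x (x/2)) (Metric.ball_mem_nhds x (by positivity))
    (Eventually.of_forall fun y => meas_aux y _)
    (integrable_master (by linarith) hx)
    ((meas_aux x _).neg)
    ?_ (integrable_master (by linarith) (by positivity)) ?_
  · have : (∫ σ in Ioi (0:ℝ),
        -(Real.exp (-(1/(4*σ))) * Real.exp (-(x*σ)) * σ ^ (-s/2))) = -(GG s x) := by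
      rw [integral_neg]; rfl
    rw [this] at key
    exact key.2
  · filter_upwards [ae_restrict_mem measurableSet_Ioi] with σ hσ
    intro y hy
    have hσ0 : (0:ℝ) < σ := hσ
    have hy2 : x/2 ≤ y := by
      have h := abs_lt.mp (by simpa [Real.dist_eq] using Metric.mem_ball.mp hy)
      linarith
    rw [norm_neg, Real.norm_eq_abs, abs_of_nonneg (by positivity)]
    have : Real.exp (-(y*σ)) ≤ Real.exp (-(x/2*σ)) := by
      apply Real.exp_le_exp.mpr; nlinarith
    have hnn : (0:ℝ) ≤ Real.exp (-(1/(4*σ))) := (Real.exp_pos _).le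
    have hnn2 : (0:ℝ) ≤ σ ^ (-s/2) := by positivity
    calc Real.exp (-(1/(4*σ))) * Real.exp (-(y*σ)) * σ ^ (-s/2)
        ≤ Real.exp (-(1/(4*σ))) * Real.exp (-(x/2*σ)) * σ ^ (-s/2) := by
          apply mul_le_mul_of_nonneg_right _ hnn2
          exact mul_le_mul_of_nonneg_left this hnn
      _ = _ := rfl
  · filter_upwards [ae_restrict_mem measurableSet_Ioi] with σ hσ
    intro y hy
    have hσ0 : (0:ℝ) < σ := hσ
    have h1 : HasDerivAt (fun y : ℝ => Real.exp (-(y*σ))) (-σ * Real.exp (-(y*σ))) y := by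
      have := ((hasDerivAt_id y).const_mul σ).neg.exp
      simpa [mul_comm] using this
    have h2 := (h1.const_mul (Real.exp (-(1/(4*σ))))).mul_const (σ ^ (-s/2-1))
    refine h2.congr_deriv ?_
    have hpow : σ ^ (-s/2-1) * σ = σ ^ (-s/2) := by
      nth_rewrite 2 [show σ = σ ^ (1:ℝ) from (Real.rpow_one σ).symm]
      rw [← Real.rpow_add hσ0]; ring_nf
    rw [← hpow]; ring

lemma sq_rpow {a : ℝ} (ha : 0 < a) (t : ℝ) : (a^2) ^ t = a ^ (2*t) := by
  rw [← Real.rpow_natCast a 2, ← Real.rpow_mul ha.le]; norm_num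

lemma subst_u {s lam ρ : ℝ} (hρ : 0 < ρ) :
    (∫ τ in Ioi (0:ℝ), Real.exp (-ρ^2/(4*τ)) * Real.exp (-τ*lam^2) * τ ^ (-s/2-1))
      = ρ ^ (-s) * FF s (lam^2*ρ^2) := by
  have hb : (0:ℝ) < ρ^2 := by positivity
  have h := integral_comp_mul_left_Ioi
    (fun τ => Real.exp (-ρ^2/(4*τ)) * Real.exp (-τ*lam^2) * τ ^ (-s/2-1)) 0 hb
  rw [mul_zero, smul_eq_mul] at h
  have h2 : (∫ τ in Ioi (0:ℝ), Real.exp (-ρ^2/(4*τ)) * Real.exp (-τ*lam^2) * τ ^ (-s/2-1))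
      = ρ^2 * ∫ σ in Ioi (0:ℝ),
          Real.exp (-ρ^2/(4*(ρ^2*σ))) * Real.exp (-(ρ^2*σ)*lam^2) * (ρ^2*σ) ^ (-s/2-1) := by
    rw [h, ← mul_assoc, mul_inv_cancel₀ hb.ne', one_mul]
  rw [h2]
  have h3 : ∀ σ ∈ Ioi (0:ℝ),
      Real.exp (-ρ^2/(4*(ρ^2*σ))) * Real.exp (-(ρ^2*σ)*lam^2) * (ρ^2*σ) ^ (-s/2-1)
        = (ρ^2) ^ (-s/2-1) *
          (Real.exp (-(1/(4*σ))) * Real.exp (-((lam^2*ρ^2)*σ)) * σ ^ (-s/2-1)) := by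
    intro σ hσ
    have hσ0 : (0:ℝ) < σ := hσ
    have e1 : -ρ^2/(4*(ρ^2*σ)) = -(1/(4*σ)) := by
      field_simp
    have e2 : -(ρ^2*σ)*lam^2 = -((lam^2*ρ^2)*σ) := by ring
    rw [e1, e2, Real.mul_rpow hb.le hσ0.le]; ring
  rw [setIntegral_congr_fun measurableSet_Ioi h3, integral_const_mul]
  have h4 : ρ^2 * ((ρ^2) ^ (-s/2-1) * FF s (lam^2*ρ^2)) = ρ ^ (-s) * FF s (lam^2*ρ^2) := by
    rw [sq_rpow hρ, ← mul_assoc]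
    congr 1
    rw [show (ρ:ℝ)^2 = ρ ^ ((2:ℝ)) by rw [← Real.rpow_natCast ρ 2]; norm_num,
        ← Real.rpow_add hρ]
    congr 1; ring
  rw [← h4]
  rfl

lemma GG_eq_HH {s x : ℝ} (hx : 0 < x) : GG s x = x ^ (s/2-1) * HH s x := by
  have h := integral_comp_mul_left_Ioi
    (fun t => Real.exp (-(x/(4*t))) * Real.exp (-t) * t ^ (-s/2)) 0 hx
  rw [mul_zero, smul_eq_mul] at h
  have h3 : ∀ σ ∈ Ioi (0:ℝ),
      Real.exp (-(x/(4*(x*σ)))) * Real.exp (-(x*σ)) * (x*σ) ^ (-s/2)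
        = x ^ (-s/2) * (Real.exp (-(1/(4*σ))) * Real.exp (-(x*σ)) * σ ^ (-s/2)) := by
    intro σ hσ
    have hσ0 : (0:ℝ) < σ := hσ
    have e1 : -(x/(4*(x*σ))) = -(1/(4*σ)) := by field_simp
    rw [e1, Real.mul_rpow hx.le hσ0.le]; ring
  rw [setIntegral_congr_fun measurableSet_Ioi h3, integral_const_mul] at h
  have h' : x ^ (-s/2) * GG s x = x⁻¹ * HH s x := h
  have hxs : (0:ℝ) < x ^ (-s/2) := Real.rpow_pos_of_pos hx _
  have key : GG s x = x ^ (s/2) * (x⁻¹ * HH s x) := by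
    rw [← h', ← mul_assoc, ← Real.rpow_add hx,
      show s/2 + -s/2 = (0:ℝ) by ring, Real.rpow_zero, one_mul]
  rw [key, show x⁻¹ = x ^ (-1:ℝ) by rw [Real.rpow_neg_one], ← mul_assoc,
    ← Real.rpow_add hx, show s/2 + -1 = s/2 - (1:ℝ) by ring]

lemma HH_tendsto {s : ℝ} (hs : 0 < s) (hs1 : s < 1) :
    Tendsto (HH s) (nhdsWithin 0 (Ioi 0)) (nhds (Real.Gamma (1 - s/2))) := by
  have hΓ : Real.Gamma (1 - s/2) = ∫ t in Ioi (0:ℝ), Real.exp (-t) * t ^ (-s/2) := by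
    rw [Real.Gamma_eq_integral (by linarith)]
    refine setIntegral_congr_fun measurableSet_Ioi fun t ht => ?_
    rw [show (1 - s/2 - 1 : ℝ) = -s/2 by ring]
  rw [hΓ]
  apply tendsto_integral_filter_of_dominated_convergence
    (bound := fun t => Real.exp (-t) * t ^ (-s/2))
  · filter_upwards [self_mem_nhdsWithin] with x hx
    have hc : ContinuousOn (fun t : ℝ => Real.exp (-(x/(4*t))) * Real.exp (-t) * t ^ (-s/2))
        (Ioi 0) := by
      apply ContinuousOn.mul
      · apply ContinuousOn.mul
        · apply Real.continuous_exp.comp_continuousOn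
          apply ContinuousOn.neg
          apply ContinuousOn.div continuousOn_const (by fun_prop)
          intro σ hσ
          have : (0:ℝ) < σ := hσ
          positivity
        · fun_prop
      · exact fun σ hσ =>
          (Real.continuousAt_rpow_const σ _ (Or.inl (ne_of_gt hσ))).continuousWithinAt
    exact hc.aestronglyMeasurable measurableSet_Ioi
  · filter_upwards [self_mem_nhdsWithin] with x hx
    filter_upwards [ae_restrict_mem measurableSet_Ioi] with t ht
    have ht0 : (0:ℝ) < t := ht
    have hx0 : (0:ℝ) < x := hx
    rw [Real.norm_eq_abs, abs_of_nonneg (by positivity)]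
    have h1 : Real.exp (-(x/(4*t))) ≤ 1 := by
      rw [Real.exp_le_one_iff]
      have : (0:ℝ) < x/(4*t) := by positivity
      linarith
    calc Real.exp (-(x/(4*t))) * Real.exp (-t) * t ^ (-s/2)
        = Real.exp (-(x/(4*t))) * (Real.exp (-t) * t ^ (-s/2)) := by ring
      _ ≤ 1 * (Real.exp (-t) * t ^ (-s/2)) :=
          mul_le_mul_of_nonneg_right h1 (by positivity)
      _ = Real.exp (-t) * t ^ (-s/2) := by ring
  · have base := integrableOn_rpow_mul_exp_neg_mul_rpow
      (show (-1:ℝ) < -s/2 by linarith) one_pos one_pos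
    have base2 : IntegrableOn (fun t : ℝ => t ^ (-s/2) * Real.exp (-t)) (Ioi 0) := by
      refine base.congr_fun (fun t ht => ?_) measurableSet_Ioi
      dsimp only
      rw [Real.rpow_one]; norm_num
    refine base2.congr_fun (fun t ht => ?_) measurableSet_Ioi
    rw [mul_comm]
  · filter_upwards [ae_restrict_mem measurableSet_Ioi] with t ht
    have ht0 : (0:ℝ) < t := ht
    have hc : Tendsto (fun x : ℝ => Real.exp (-(x/(4*t))) * Real.exp (-t) * t ^ (-s/2))
        (nhdsWithin 0 (Ioi 0)) (nhds (Real.exp (-(0/(4*t))) * Real.exp (-t) * t ^ (-s/2))) := by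
      apply Tendsto.mono_left _ nhdsWithin_le_nhds
      apply Continuous.tendsto
      fun_prop
    simpa using hc


end Stmt8Aux

open Stmt8Aux in
/-- Scalar version of the paper's claim (2.2): with
`u(ρ) = ρ^s Γ(s)⁻¹ ∫₀^∞ e^{−ρ²/(4τ)} e^{−τλ²} τ^{−s/2−1} dτ`, the quantity
`ρ^{1−s} u'(ρ)` converges as `ρ → 0⁺` to `−(2Γ(1−s/2)/Γ(s)) λ^s`. -/
theorem stmt8 (s lam : ℝ) (hs : 0 < s) (hs1 : s < 1) (hlam : 0 < lam)
    (u : ℝ → ℝ)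
    (hu : ∀ ρ : ℝ, u ρ = ρ ^ s * ((1 / Real.Gamma s) *
      ∫ τ in Set.Ioi (0 : ℝ),
        Real.exp (-ρ ^ 2 / (4 * τ)) * Real.exp (-τ * lam ^ 2) * τ ^ (-s / 2 - 1))) :
    Tendsto (fun ρ : ℝ => ρ ^ (1 - s) * deriv u ρ)
      (nhdsWithin 0 (Set.Ioi 0))
      (nhds (-(2 * Real.Gamma (1 - s / 2) / Real.Gamma s) * lam ^ s)) := by
  have hΓ : 0 < Real.Gamma s := Real.Gamma_pos_of_pos hs
  set C : ℝ := 1 / Real.Gamma s with hC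
  have hclosed : ∀ ρ ∈ Set.Ioi (0:ℝ), u ρ = C * FF s (lam^2*ρ^2) := by
    intro ρ hρ
    have hρ0 : (0:ℝ) < ρ := hρ
    rw [hu ρ, subst_u hρ0]
    have h1 : ρ ^ s * ρ ^ (-s) = 1 := by
      rw [← Real.rpow_add hρ0, show s + -s = (0:ℝ) by ring, Real.rpow_zero]
    calc ρ ^ s * (C * (ρ ^ (-s) * FF s (lam^2*ρ^2)))
        = (ρ ^ s * ρ ^ (-s)) * (C * FF s (lam^2*ρ^2)) := by ring
      _ = C * FF s (lam^2*ρ^2) := by rw [h1, one_mul]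
  have hderiv : ∀ ρ ∈ Set.Ioi (0:ℝ),
      deriv u ρ = C * (-(GG s (lam^2*ρ^2)) * (lam^2 * (2*ρ))) := by
    intro ρ hρ
    have hρ0 : (0:ℝ) < ρ := hρ
    have hX : (0:ℝ) < lam^2*ρ^2 := by positivity
    have hinner : HasDerivAt (fun r : ℝ => lam^2*r^2) (lam^2 * (2*ρ)) ρ := by
      have := (hasDerivAt_pow 2 ρ).const_mul (lam^2)
      simpa [mul_comm] using this
    have houter := hasDerivAt_FF hs hs1 hX
    have hcomp : HasDerivAt (fun r : ℝ => C * FF s (lam^2*r^2))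
        (C * (-(GG s (lam^2*ρ^2)) * (lam^2 * (2*ρ)))) ρ :=
      ((houter.comp (h := fun r : ℝ => lam^2*r^2) ρ hinner).const_mul C)
    have hev : u =ᶠ[nhds ρ] fun r => C * FF s (lam^2*r^2) := by
      filter_upwards [Ioi_mem_nhds hρ0] with r hr
      exact hclosed r hr
    rw [hev.deriv_eq, hcomp.deriv]
  have heq : ∀ᶠ ρ in nhdsWithin 0 (Set.Ioi 0),
      ρ ^ (1-s) * deriv u ρ = (-(2*C*lam^s)) * HH s (lam^2*ρ^2) := by
    filter_upwards [self_mem_nhdsWithin] with ρ hρ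
    have hρ0 : (0:ℝ) < ρ := hρ
    have hX : (0:ℝ) < lam^2*ρ^2 := by positivity
    rw [hderiv ρ hρ, GG_eq_HH hX]
    have hXs : (lam^2*ρ^2 : ℝ) ^ (s/2-1) = lam ^ (s-2) * ρ ^ (s-2) := by
      rw [Real.mul_rpow (by positivity) (by positivity), sq_rpow hlam, sq_rpow hρ0,
        show 2*(s/2-1) = s-2 by ring]
    rw [hXs]
    have e1 : ρ ^ (s-2) * ρ = ρ ^ (s-1) := by
      rw [show s-1 = s-2+1 by ring, Real.rpow_add_one hρ0.ne']
    have e2 : ρ ^ (1-s) * ρ ^ (s-1) = 1 := by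
      rw [← Real.rpow_add hρ0, show 1-s+(s-1) = (0:ℝ) by ring, Real.rpow_zero]
    have e3 : lam^2 * lam^(s-2) = lam ^ s := by
      rw [show (lam:ℝ)^2 = lam ^ ((2:ℕ):ℝ) by rw [Real.rpow_natCast],
        ← Real.rpow_add hlam, show ((2:ℕ):ℝ) + (s-2) = s by push_cast; ring]
    calc ρ ^ (1-s) * (C * (-(lam ^ (s-2) * ρ ^ (s-2) * HH s (lam^2*ρ^2)) * (lam^2 * (2*ρ))))
        = (ρ ^ (1-s) * (ρ ^ (s-2) * ρ)) * (lam^2 * lam^(s-2)) * (-2*C) *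
            HH s (lam^2*ρ^2) := by ring
      _ = (ρ ^ (1-s) * ρ ^ (s-1)) * (lam ^ s) * (-2*C) * HH s (lam^2*ρ^2) := by
          rw [e1, e3]
      _ = (-(2*C*lam^s)) * HH s (lam^2*ρ^2) := by rw [e2]; ring
  have hinner2 : Tendsto (fun ρ : ℝ => lam^2*ρ^2) (nhdsWithin 0 (Set.Ioi 0))
      (nhdsWithin 0 (Set.Ioi 0)) := by
    rw [tendsto_nhdsWithin_iff]
    constructor
    · have hcont : Continuous fun ρ : ℝ => lam^2*ρ^2 := by continuity
      have h0 := (hcont.tendsto 0).mono_left (nhdsWithin_le_nhds (s := Set.Ioi (0:ℝ)))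
      simpa using h0
    · filter_upwards [self_mem_nhdsWithin] with ρ hρ
      have hρ0 : (0:ℝ) < ρ := hρ
      exact Set.mem_Ioi.mpr (by positivity)
  have hlim := ((HH_tendsto hs hs1).comp hinner2).const_mul (-(2*C*lam^s))
  have hval : (-(2*C*lam^s)) * Real.Gamma (1-s/2)
      = -(2 * Real.Gamma (1 - s / 2) / Real.Gamma s) * lam ^ s := by
    rw [hC]; field_simp
  rw [← hval]
  have heq' : (fun ρ : ℝ => -(2*C*lam^s) * HH s (lam^2*ρ^2))
      =ᶠ[nhdsWithin 0 (Set.Ioi 0)] fun ρ : ℝ => ρ ^ (1-s) * deriv u ρ :=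
    heq.mono fun ρ h => h.symm
  exact Tendsto.congr' heq' hlim
end
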